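/- (Corollary 3) Let L be a finite-dimensional nilpotent left Leibniz algebra over a field k of characteristic 0 such that the commutant [L,L] has codimension 1 in L. Then L is generated by a single element: there exists a ∈ L such that the smallest subalgebra of L containing a equals L. -/
import Mathlib


/-
Basic notions for (left) Leibniz algebras, given by a bilinear bracket
`β : M →ₗ[k] M →ₗ[k] M` on a `k`-vector space `M`.
-/

section LeibnizDefs

variable {k : Type*} [Field k] {M : Type*} [AddCommGroup M] [Module k M]

/-- `[A, B]`: the linear span of brackets of elements of two subspaces. -/
def bracketSpan (β : M →ₗ[k] M →ₗ[k] M) (A B : Submodule k M) : Submodule k M :=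
  Submodule.span k {z : M | ∃ a ∈ A, ∃ b ∈ B, z = β a b}

/-- Derived series of a subspace `I`: `D^0 = I`, `D^{n+1} = [D^n, D^n]`. -/
def derivedSeriesOf (β : M →ₗ[k] M →ₗ[k] M) (I : Submodule k M) : ℕ → Submodule k M
  | 0 => I
  | n + 1 => bracketSpan β (derivedSeriesOf β I n) (derivedSeriesOf β I n)

/-- Lower central series of a subspace `I`: `C^0 = I`, `C^{n+1} = [I, C^n]`. -/
def lowerCentralSeriesOf (β : M →ₗ[k] M →ₗ[k] M) (I : Submodule k M) : ℕ → Submodule k M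
  | 0 => I
  | n + 1 => bracketSpan β I (lowerCentralSeriesOf β I n)

/-- A two-sided ideal. -/
def LeibnizIdeal (β : M →ₗ[k] M →ₗ[k] M) (I : Submodule k M) : Prop :=
  (∀ x : M, ∀ u ∈ I, β x u ∈ I) ∧ (∀ u ∈ I, ∀ x : M, β u x ∈ I)

/-- A subspace is solvable if its derived series reaches `0`. -/
def LeibnizSolvable (β : M →ₗ[k] M →ₗ[k] M) (I : Submodule k M) : Prop :=
  ∃ n, derivedSeriesOf β I n = ⊥

/-- A subspace is nilpotent if its lower central series reaches `0`. -/
def LeibnizNilpotent (β : M →ₗ[k] M →ₗ[k] M) (I : Submodule k M) : Prop :=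
  ∃ n, lowerCentralSeriesOf β I n = ⊥

/-- A subalgebra: a subspace closed under the bracket. -/
def LeibnizSubalgebra (β : M →ₗ[k] M →ₗ[k] M) (S : Submodule k M) : Prop :=
  ∀ u ∈ S, ∀ v ∈ S, β u v ∈ S

end LeibnizDefs

section Aux

variable {k : Type*} [Field k] {M : Type*} [AddCommGroup M] [Module k M]

lemma bracketSpan_mono (β : M →ₗ[k] M →ₗ[k] M) {A A' B B' : Submodule k M}
    (hA : A ≤ A') (hB : B ≤ B') : bracketSpan β A B ≤ bracketSpan β A' B' :=
  Submodule.span_mono (by rintro z ⟨a, ha, b, hb, rfl⟩; exact ⟨a, hA ha, b, hB hb, rfl⟩)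

lemma mem_bracketSpan (β : M →ₗ[k] M →ₗ[k] M) {A B : Submodule k M} {u v : M}
    (hu : u ∈ A) (hv : v ∈ B) : β u v ∈ bracketSpan β A B :=
  Submodule.subset_span ⟨u, hu, v, hv, rfl⟩

lemma lcs_succ_le (β : M →ₗ[k] M →ₗ[k] M) :
    ∀ n, lowerCentralSeriesOf β ⊤ (n + 1) ≤ lowerCentralSeriesOf β ⊤ n
  | 0 => le_top
  | n + 1 => bracketSpan_mono β le_rfl (lcs_succ_le β n)

lemma lcs_le_of_le (β : M →ₗ[k] M →ₗ[k] M) {m n : ℕ} (h : m ≤ n) :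
    lowerCentralSeriesOf β ⊤ n ≤ lowerCentralSeriesOf β ⊤ m := by
  induction h with
  | refl => exact le_rfl
  | step _ ih => exact (lcs_succ_le β _).trans ih

lemma keyAll (β : M →ₗ[k] M →ₗ[k] M)
    (leib : ∀ x y z : M, β x (β y z) = β (β x y) z + β y (β x z)) :
    ∀ a b : ℕ, ∀ u ∈ lowerCentralSeriesOf β ⊤ a, ∀ v ∈ lowerCentralSeriesOf β ⊤ b,
      β u v ∈ lowerCentralSeriesOf β ⊤ (a + b + 1) := by
  intro a
  induction a with
  | zero =>
    intro b u _ v hv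
    simp only [Nat.zero_add]
    exact mem_bracketSpan β Submodule.mem_top hv
  | succ a ih =>
    intro b u hu
    refine Submodule.span_induction (p := fun u _ => ∀ v ∈ lowerCentralSeriesOf β ⊤ b,
        β u v ∈ lowerCentralSeriesOf β ⊤ (a + 1 + b + 1)) ?_ ?_ ?_ ?_ hu
    · rintro z ⟨x, -, c, hc, rfl⟩ v hv
      have h2 : β (β x c) v = β x (β c v) - β c (β x v) := by
        rw [leib x c v]; abel
      rw [h2]
      refine Submodule.sub_mem _ ?_ ?_
      · have h3 : β c v ∈ lowerCentralSeriesOf β ⊤ (a + b + 1) := ih b c hc v hv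
        have h4 : β x (β c v) ∈ lowerCentralSeriesOf β ⊤ (a + b + 1 + 1) :=
          mem_bracketSpan β Submodule.mem_top h3
        have he : a + b + 1 + 1 = a + 1 + b + 1 := by omega
        rwa [he] at h4
      · have h3 : β x v ∈ lowerCentralSeriesOf β ⊤ (b + 1) :=
          mem_bracketSpan β Submodule.mem_top hv
        have h4 := ih (b + 1) c hc (β x v) h3
        have he : a + (b + 1) + 1 = a + 1 + b + 1 := by omega
        rwa [he] at h4
    · intro v _
      simp
    · intro y z _ _ hy hz v hv
      have : β (y + z) v = β y v + β z v := by simp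
      rw [this]; exact Submodule.add_mem _ (hy v hv) (hz v hv)
    · intro c y _ hy v hv
      have : β (c • y) v = c • (β y v) := by simp
      rw [this]; exact Submodule.smul_mem _ _ (hy v hv)

end Aux

/-- A nilpotent Leibniz algebra whose commutant has codimension 1 is generated by one
element. -/
theorem stmt_10 {k : Type*} [Field k] [CharZero k] {L : Type*} [AddCommGroup L] [Module k L]
    [FiniteDimensional k L] (β : L →ₗ[k] L →ₗ[k] L)
    (leib : ∀ x y z : L, β x (β y z) = β (β x y) z + β y (β x z))
    (hnil : LeibnizNilpotent β (⊤ : Submodule k L))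
    (hcodim : Module.finrank k (L ⧸ bracketSpan β ⊤ ⊤) = 1) :
    ∃ a : L, ∀ S : Submodule k L, LeibnizSubalgebra β S → a ∈ S → S = ⊤ := by
  set C1 : Submodule k L := bracketSpan β ⊤ ⊤ with hC1
  -- find a generator modulo the commutant
  have hnt : Nontrivial (L ⧸ C1) := by
    apply Module.nontrivial_of_finrank_pos (R := k)
    rw [hcodim]; norm_num
  obtain ⟨q, hq⟩ := exists_ne (0 : L ⧸ C1)
  obtain ⟨a, rfl⟩ := Submodule.Quotient.mk_surjective C1 q
  have hspan : Submodule.span k {Submodule.Quotient.mk (p := C1) a} = ⊤ := by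
    apply Submodule.eq_top_of_finrank_eq
    rw [finrank_span_singleton hq, hcodim]
  have htop : (⊤ : Submodule k L) ≤ Submodule.span k {a} ⊔ C1 := by
    intro x _
    have hx : (Submodule.Quotient.mk x : L ⧸ C1) ∈
        Submodule.span k {Submodule.Quotient.mk (p := C1) a} := by
      rw [hspan]; trivial
    obtain ⟨c, hc⟩ := Submodule.mem_span_singleton.1 hx
    have hmem : x - c • a ∈ C1 := by
      rw [← Submodule.Quotient.mk_eq_zero]
      have : (Submodule.Quotient.mk (x - c • a) : L ⧸ C1)
          = Submodule.Quotient.mk x - c • Submodule.Quotient.mk a := by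
        simp [Submodule.Quotient.mk_sub, Submodule.Quotient.mk_smul]
      rw [this, ← hc, sub_self]
    have : x = c • a + (x - c • a) := by abel
    rw [this]
    exact Submodule.add_mem _
      (Submodule.mem_sup_left (Submodule.smul_mem _ _ (Submodule.mem_span_singleton_self a)))
      (Submodule.mem_sup_right hmem)
  refine ⟨a, fun S hsub haS => ?_⟩
  have hS1 : S ⊔ lowerCentralSeriesOf β ⊤ 1 = ⊤ := by
    apply top_le_iff.1
    refine le_trans htop (sup_le ?_ ?_)
    · exact le_trans (Submodule.span_le.2 (by simpa using haS)) le_sup_left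
    · exact le_sup_right
  have claim : ∀ n, S ⊔ lowerCentralSeriesOf β ⊤ (n + 1) = ⊤ := by
    intro n
    induction n with
    | zero => exact hS1
    | succ n ih =>
      have step : lowerCentralSeriesOf β ⊤ (n + 1) ≤ S ⊔ lowerCentralSeriesOf β ⊤ (n + 2) := by
        show bracketSpan β ⊤ (lowerCentralSeriesOf β ⊤ n) ≤ _
        refine Submodule.span_le.2 ?_
        rintro z ⟨x, -, c, hc, rfl⟩
        have hx : x ∈ S ⊔ lowerCentralSeriesOf β ⊤ (n + 1) := by rw [ih]; trivial
        obtain ⟨s, hs, u, hu, rfl⟩ := Submodule.mem_sup.1 hx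
        have hcmem : c ∈ S ⊔ lowerCentralSeriesOf β ⊤ (n + 1) := by rw [ih]; trivial
        obtain ⟨s', hs', u', hu', hc'⟩ := Submodule.mem_sup.1 hcmem
        have hsplit : β (s + u) c = β s s' + β s u' + β u c := by
          rw [← hc']; simp only [map_add, LinearMap.add_apply]; abel
        rw [hsplit]
        refine Submodule.add_mem _ (Submodule.add_mem _ ?_ ?_) ?_
        · exact Submodule.mem_sup_left (hsub s hs s' hs')
        · refine Submodule.mem_sup_right ?_
          have := keyAll β leib 0 (n + 1) s Submodule.mem_top u' hu'
          simpa using this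
        · refine Submodule.mem_sup_right ?_
          have h := keyAll β leib (n + 1) n u hu c hc
          exact lcs_le_of_le β (by omega) h
      apply top_le_iff.1
      calc (⊤ : Submodule k L) = S ⊔ lowerCentralSeriesOf β ⊤ (n + 1) := ih.symm
        _ ≤ S ⊔ (S ⊔ lowerCentralSeriesOf β ⊤ (n + 2)) := sup_le_sup_left step S
        _ = S ⊔ lowerCentralSeriesOf β ⊤ (n + 2) := by rw [← sup_assoc, sup_idem]
  obtain ⟨N, hN⟩ := hnil
  have hbot : lowerCentralSeriesOf β ⊤ (N + 1) = ⊥ :=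
    le_bot_iff.1 (hN ▸ lcs_succ_le β N)
  have := claim N
  rw [hbot, sup_bot_eq] at this
  exact this
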